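/- arXiv:2212.13199 — 4 statements merged into one kernel-verified Lean document; each statement's English description precedes it below -/
import Mathlib

section
/- Let 𝒜 be a finite set of pairwise disjoint bounded open intervals in ℝ, each of length greater than a > 0. Then there exists a subset ℬ ⊆ 𝒜 such that the total length of intervals in ℬ is at least one third of the total length of intervals in 𝒜, and any two distinct intervals in ℬ are at distance greater than a from each other. -/
private lemma sep4 (q r : ℝ × ℝ) (hq : q.1 < q.2) (hr : r.1 < r.2)
    (h : Disjoint (Set.Ioo q.1 q.2) (Set.Ioo r.1 r.2)) : q.2 ≤ r.1 ∨ r.2 ≤ q.1 := by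
  rw [Set.Ioo_disjoint_Ioo] at h
  rcases le_total q.2 r.2 with h1 | h1 <;> rcases le_total q.1 r.1 with h2 | h2 <;>
    simp [min_eq_left, min_eq_right, max_eq_left, max_eq_right, h1, h2] at h <;>
    [left; left; right; right] <;> linarith

/-- Lemma about segments (Section 6.3): from a finite family `𝒜` of pairwise
disjoint bounded open intervals (represented by their pairs of endpoints), each of
length `> a > 0`, one can select a subfamily `ℬ` of total length `≥ ‖𝒜‖/3` whose
members are pairwise at distance `> a`. The distance between two disjoint open
intervals `(p₁,p₂)` and `(q₁,q₂)` is `max (q₁ - p₂) (p₁ - q₂)`. -/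
theorem stmt4 (a : ℝ) (ha : 0 < a) (𝒜 : Finset (ℝ × ℝ))
    (hlen : ∀ p ∈ 𝒜, a < p.2 - p.1)
    (hdisj : ∀ p ∈ 𝒜, ∀ q ∈ 𝒜, p ≠ q → Disjoint (Set.Ioo p.1 p.2) (Set.Ioo q.1 q.2)) :
    ∃ ℬ ⊆ 𝒜,
      (∑ p ∈ ℬ, (p.2 - p.1)) ≥ (1 / 3) * ∑ p ∈ 𝒜, (p.2 - p.1) ∧
      ∀ p ∈ ℬ, ∀ q ∈ ℬ, p ≠ q → a < max (q.1 - p.2) (p.1 - q.2) := by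
  revert hlen hdisj
  induction 𝒜 using Finset.strongInduction with
  | _ 𝒜 ih =>
    intro hlen hdisj
    rcases 𝒜.eq_empty_or_nonempty with rfl | hne
    · exact ⟨∅, by simp⟩
    obtain ⟨p, hp, hmax⟩ := 𝒜.exists_max_image (fun q => q.2 - q.1) hne
    have hlt : ∀ q ∈ 𝒜, q.1 < q.2 := fun q hq => by have := hlen q hq; linarith
    set D : Finset (ℝ × ℝ) := 𝒜.filter (fun q => max (q.1 - p.2) (p.1 - q.2) ≤ a) with hD
    have hpD : p ∈ D := by
      simp only [hD, Finset.mem_filter]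
      refine ⟨hp, ?_⟩
      have := hlt p hp
      simp only [max_le_iff]; constructor <;> linarith
    have hsub : 𝒜 \ D ⊂ 𝒜 := by
      constructor
      · exact Finset.sdiff_subset
      · intro h
        have := h hp
        simp [Finset.mem_sdiff, hpD] at this
    -- D has at most 3 elements
    have hcard : D.card ≤ 3 := by
      have : D.card ≤ (Finset.univ : Finset (Fin 3)).card := by
        apply Finset.card_le_card_of_injOn
          (fun q => if q = p then 0 else if q.2 ≤ p.1 then 1 else 2)
        · intro _ _; exact Finset.mem_univ _
        · intro q hq r hr hqr
          simp only [hD, Finset.mem_filter, Finset.mem_coe] at hq hr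
          obtain ⟨hqA, hqd⟩ := hq
          obtain ⟨hrA, hrd⟩ := hr
          by_contra hne'
          have hqp2 : q.1 < q.2 := hlt q hqA
          have hrp2 : r.1 < r.2 := hlt r hrA
          have hpp : p.1 < p.2 := hlt p hp
          have hqlen := hlen q hqA
          have hrlen := hlen r hrA
          by_cases hqp : q = p <;> by_cases hrp : r = p
          · exact hne' (hqp.trans hrp.symm)
          · simp only [if_pos hqp, if_neg hrp] at hqr
            split_ifs at hqr <;> simp at hqr
          · simp only [if_pos hrp, if_neg hqp] at hqr
            split_ifs at hqr <;> simp at hqr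
          · -- q ≠ p, r ≠ p, q ≠ r
            simp only [if_neg hqp, if_neg hrp] at hqr
            have hsqp := sep4 q p hqp2 hpp (hdisj q hqA p hp hqp)
            have hsrp := sep4 r p hrp2 hpp (hdisj r hrA p hp hrp)
            have hsqr := sep4 q r hqp2 hrp2 (hdisj q hqA r hrA hne')
            rw [max_le_iff] at hqd hrd
            by_cases hq1 : q.2 ≤ p.1 <;> by_cases hr1 : r.2 ≤ p.1
            · -- both left of p
              rcases hsqr with h | h <;> linarith [hqd.2, hrd.2]
            · simp [hq1, hr1] at hqr
            · simp [hq1, hr1] at hqr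
            · -- both right of p
              have hq2 : p.2 ≤ q.1 := hsqp.resolve_left hq1
              have hr2 : p.2 ≤ r.1 := hsrp.resolve_left hr1
              rcases hsqr with h | h <;> linarith [hqd.1, hrd.1]
      simpa using this
    have hlenD : ∀ q ∈ D, q.2 - q.1 ≤ p.2 - p.1 := fun q hq =>
      hmax q (Finset.mem_of_mem_filter q hq)
    have hsumD : ∑ q ∈ D, (q.2 - q.1) ≤ 3 * (p.2 - p.1) := by
      calc ∑ q ∈ D, (q.2 - q.1) ≤ ∑ _q ∈ D, (p.2 - p.1) := Finset.sum_le_sum hlenD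
        _ = D.card * (p.2 - p.1) := by rw [Finset.sum_const]; ring
        _ ≤ 3 * (p.2 - p.1) := by
            apply mul_le_mul_of_nonneg_right _ (by have := hlen p hp; linarith)
            exact_mod_cast hcard
    obtain ⟨ℬ', hℬ'sub, hℬ'sum, hℬ'dist⟩ := ih (𝒜 \ D) hsub
      (fun q hq => hlen q (Finset.mem_sdiff.mp hq).1)
      (fun q hq r hr hqr => hdisj q (Finset.mem_sdiff.mp hq).1 r (Finset.mem_sdiff.mp hr).1 hqr)
    have hpnot : p ∉ ℬ' := fun h => (Finset.mem_sdiff.mp (hℬ'sub h)).2 hpD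
    refine ⟨insert p ℬ', ?_, ?_, ?_⟩
    · intro q hq
      rcases Finset.mem_insert.mp hq with rfl | hq
      · exact hp
      · exact (Finset.mem_sdiff.mp (hℬ'sub hq)).1
    · rw [Finset.sum_insert hpnot]
      have hsplit : ∑ q ∈ 𝒜, (q.2 - q.1) = ∑ q ∈ D, (q.2 - q.1) + ∑ q ∈ 𝒜 \ D, (q.2 - q.1) := by
        have hDsub : D ⊆ 𝒜 := Finset.filter_subset _ 𝒜
        rw [← Finset.sum_sdiff hDsub]; ring
      rw [ge_iff_le] at hℬ'sum ⊢
      rw [hsplit]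
      linarith
    · intro q hq r hr hqr
      have hfar : ∀ s ∈ ℬ', a < max (s.1 - p.2) (p.1 - s.2) := by
        intro s hs
        have := (Finset.mem_sdiff.mp (hℬ'sub hs)).2
        simp only [hD, Finset.mem_filter, (Finset.mem_sdiff.mp (hℬ'sub hs)).1, true_and,
          not_le] at this
        exact this
      rcases Finset.mem_insert.mp hq with hq' | hq' <;>
        rcases Finset.mem_insert.mp hr with hr' | hr'
      · exact absurd (hq'.trans hr'.symm) hqr
      · rw [hq']; exact hfar r hr'
      · rw [hr', max_comm]; exact hfar q hq'
      · exact hℬ'dist q hq' r hr' hqr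
end

section
/- Suppose a finite set 𝒜 of pairwise disjoint open intervals in ℝ, each of length greater than a > 0, is given, and I ∈ 𝒜 is an interval of maximal length. Then the set 𝒟 = {D ∈ 𝒜 \ {I} : dist(I, D) ≤ a} has cardinality at most 2, and |I| ≥ (1/3)·(|I| + Σ_{D ∈ 𝒟} |D|). -/
/-- Induction step of the lemma about segments: if `I ∈ 𝒜` has maximal length among
a finite family of pairwise disjoint open intervals of length `> a > 0`, then the set
`𝒟` of other members of `𝒜` at distance `≤ a` from `I` has at most 2 elements, and
`|I| ≥ (1/3)(|I| + Σ_{D ∈ 𝒟} |D|)`. The distance between disjoint open intervals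
`(p₁,p₂)` and `(q₁,q₂)` is `max (q₁ - p₂) (p₁ - q₂)`. -/
theorem stmt5 (a : ℝ) (ha : 0 < a) (𝒜 : Finset (ℝ × ℝ))
    (hlen : ∀ p ∈ 𝒜, a < p.2 - p.1)
    (hdisj : ∀ p ∈ 𝒜, ∀ q ∈ 𝒜, p ≠ q → Disjoint (Set.Ioo p.1 p.2) (Set.Ioo q.1 q.2))
    (I : ℝ × ℝ) (hI : I ∈ 𝒜) (hImax : ∀ p ∈ 𝒜, p.2 - p.1 ≤ I.2 - I.1)
    (𝒟 : Finset (ℝ × ℝ))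
    (h𝒟 : 𝒟 = (𝒜.erase I).filter (fun D => max (D.1 - I.2) (I.1 - D.2) ≤ a)) :
    𝒟.card ≤ 2 ∧ I.2 - I.1 ≥ (1 / 3) * ((I.2 - I.1) + ∑ D ∈ 𝒟, (D.2 - D.1)) := by
  -- basic facts about members of 𝒟
  have hmem : ∀ D ∈ 𝒟, D ∈ 𝒜 ∧ D ≠ I ∧ D.1 - I.2 ≤ a ∧ I.1 - D.2 ≤ a := by
    intro D hD
    rw [h𝒟, Finset.mem_filter, Finset.mem_erase] at hD
    exact ⟨hD.1.2, hD.1.1, le_of_max_le_left hD.2, le_of_max_le_right hD.2⟩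
  -- each D is entirely on one side of I
  have hside : ∀ D ∈ 𝒟, I.2 ≤ D.1 ∨ D.2 ≤ I.1 := by
    intro D hD
    obtain ⟨hDA, hDI, _, _⟩ := hmem D hD
    have hd := hdisj I hI D hDA (Ne.symm hDI)
    rw [Set.Ioo_disjoint_Ioo] at hd
    have hI' : I.1 < I.2 := by nlinarith [hlen I hI]
    have hD' : D.1 < D.2 := by nlinarith [hlen D hDA]
    rcases min_le_iff.1 hd with h | h
    · rcases le_max_iff.1 h with h' | h'
      · exact absurd h' (not_le.2 hI')
      · exact Or.inl h'
    · rcases le_max_iff.1 h with h' | h'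
      · exact Or.inr h'
      · exact absurd h' (not_le.2 hD')
  have hcard : 𝒟.card ≤ 2 := by
    have : 𝒟.card ≤ (Finset.univ : Finset Bool).card := by
      apply Finset.card_le_card_of_injOn (fun D => decide (I.2 ≤ D.1))
      · intro _ _; exact Finset.mem_univ _
      · intro D hD D' hD' hf
        by_contra hne
        obtain ⟨hDA, _, hDa, hDa'⟩ := hmem D hD
        obtain ⟨hD'A, _, hD'a, hD'a'⟩ := hmem D' hD'
        have hlD := hlen D hDA
        have hlD' := hlen D' hD'A
        have hd := hdisj D hDA D' hD'A hne
        rw [Set.Ioo_disjoint_Ioo] at hd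
        have hlI := hlen I hI
        rcases hside D hD with h1 | h1 <;> rcases hside D' hD' with h2 | h2
        · rcases min_le_iff.1 hd with h | h <;> rcases le_max_iff.1 h with h' | h' <;> nlinarith
        · simp only [decide_eq_decide] at hf
          have : I.2 ≤ D'.1 := hf.1 h1
          nlinarith
        · simp only [decide_eq_decide] at hf
          have : I.2 ≤ D.1 := hf.2 h2
          nlinarith
        · rcases min_le_iff.1 hd with h | h <;> rcases le_max_iff.1 h with h' | h' <;> nlinarith
    simpa using this
  refine ⟨hcard, ?_⟩
  have hsum : ∑ D ∈ 𝒟, (D.2 - D.1) ≤ 𝒟.card • (I.2 - I.1) := by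
    apply Finset.sum_le_card_nsmul
    intro D hD
    exact hImax D (hmem D hD).1
  have h2 : (𝒟.card : ℝ) ≤ 2 := by exact_mod_cast hcard
  have hIpos : 0 < I.2 - I.1 := lt_trans ha (hlen I hI)
  have : ∑ D ∈ 𝒟, (D.2 - D.1) ≤ 2 * (I.2 - I.1) := by
    calc ∑ D ∈ 𝒟, (D.2 - D.1) ≤ 𝒟.card • (I.2 - I.1) := hsum
    _ = (𝒟.card : ℝ) * (I.2 - I.1) := by rw [nsmul_eq_mul]
    _ ≤ 2 * (I.2 - I.1) := by nlinarith
  linarith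
end

section
/- Fix ρ > 0, N ≥ 2 an integer, μ = N/(N-1), and K = 1 + ⌊log_μ(2/ρ)⌋. Let I ⊂ ℝ be a segment with |I| ≥ N^K and let P ⊆ ℕ ∩ I be a set of 'jumpers' with #P ≥ ρ·|I|. Then there exists a subsegment J ⊆ I of length ≥ |I|/N^K such that when J is subdivided into N congruent pieces, each piece contains at least one element of P. -/
/-- The number of naturals in `[u,v]` is at most `v - u + 1`. -/
lemma stmt12_count_le (P : Finset ℕ) (u v : ℝ) (huv : 0 ≤ v - u) :
    ((P.filter (fun p : ℕ => (p : ℝ) ∈ Set.Icc u v)).card : ℝ) ≤ v - u + 1 := by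
  by_cases hv : 0 ≤ v
  · have hsub : P.filter (fun p : ℕ => (p : ℝ) ∈ Set.Icc u v) ⊆ Finset.Icc ⌈u⌉₊ ⌊v⌋₊ := by
      intro p hp
      simp only [Finset.mem_filter, Set.mem_Icc] at hp
      exact Finset.mem_Icc.mpr ⟨Nat.ceil_le.mpr hp.2.1, Nat.le_floor hp.2.2⟩
    have h1 : (P.filter (fun p : ℕ => (p : ℝ) ∈ Set.Icc u v)).card ≤ ⌊v⌋₊ + 1 - ⌈u⌉₊ := by
      simpa [Nat.card_Icc] using Finset.card_le_card hsub
    have h2 : ((⌊v⌋₊ + 1 - ⌈u⌉₊ : ℕ) : ℝ) ≤ v - u + 1 := by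
      rcases le_or_gt (⌈u⌉₊) (⌊v⌋₊ + 1) with h | h
      · rw [Nat.cast_sub h]
        have := Nat.floor_le hv
        have := Nat.le_ceil u
        push_cast
        linarith
      · have : ⌊v⌋₊ + 1 - ⌈u⌉₊ = 0 := by omega
        rw [this]
        push_cast
        linarith
    calc ((P.filter (fun p : ℕ => (p : ℝ) ∈ Set.Icc u v)).card : ℝ)
        ≤ ((⌊v⌋₊ + 1 - ⌈u⌉₊ : ℕ) : ℝ) := by exact_mod_cast h1
      _ ≤ v - u + 1 := h2
  · have : P.filter (fun p : ℕ => (p : ℝ) ∈ Set.Icc u v) = ∅ := by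
      apply Finset.filter_eq_empty_iff.mpr
      intro p _
      simp only [Set.mem_Icc]
      push_neg
      intro _
      have : (0 : ℝ) ≤ p := Nat.cast_nonneg p
      linarith
    rw [this]
    simp
    linarith

/-- The interval `[u,v]` is covered by its `N` congruent pieces. -/
lemma stmt12_cover (P : Finset ℕ) (N : ℕ) (hN : 0 < N) (u v : ℝ) (huv : u ≤ v) :
    P.filter (fun p : ℕ => (p : ℝ) ∈ Set.Icc u v) ⊆
      (Finset.range N).biUnion (fun k => P.filter (fun p =>
        (p : ℝ) ∈ Set.Icc (u + k * ((v - u) / N)) (u + (k + 1) * ((v - u) / N)))) := by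
  intro p hp
  simp only [Finset.mem_filter, Set.mem_Icc] at hp
  obtain ⟨hpP, hup, hpv⟩ := hp
  simp only [Finset.mem_biUnion, Finset.mem_range, Finset.mem_filter, Set.mem_Icc]
  set d : ℝ := (v - u) / N with hd
  have hN0 : (0 : ℝ) < N := by exact_mod_cast hN
  have hNd : (N : ℝ) * d = v - u := by
    rw [hd]; field_simp
  by_cases hvu : v = u
  · refine ⟨0, hN, hpP, ?_, ?_⟩
    · simp; linarith
    · have : d = 0 := by rw [hd, hvu]; simp
      rw [this]; simpa using by linarith [hpv.trans_eq hvu]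
  · have hd0 : 0 < d := by
      rw [hd]
      apply div_pos _ hN0
      rcases lt_or_eq_of_le huv with h | h
      · linarith
      · exact absurd h.symm hvu
    set t : ℝ := ((p : ℝ) - u) / d with ht
    have ht0 : 0 ≤ t := div_nonneg (by linarith) hd0.le
    have htd : t * d = (p : ℝ) - u := div_mul_cancel₀ _ hd0.ne'
    refine ⟨min ⌊t⌋₊ (N - 1), by omega, hpP, ?_, ?_⟩
    · have h1 : ((min ⌊t⌋₊ (N - 1) : ℕ) : ℝ) ≤ t := by
        calc ((min ⌊t⌋₊ (N - 1) : ℕ) : ℝ) ≤ (⌊t⌋₊ : ℝ) := by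
              exact_mod_cast min_le_left _ _
          _ ≤ t := Nat.floor_le ht0
      nlinarith
    · rcases le_or_gt ⌊t⌋₊ (N - 1) with h | h
      · have hmin : min ⌊t⌋₊ (N - 1) = ⌊t⌋₊ := min_eq_left h
        rw [hmin]
        have := Nat.lt_floor_add_one t
        nlinarith
      · have hmin : min ⌊t⌋₊ (N - 1) = N - 1 := min_eq_right h.le
        rw [hmin]
        have hcast : ((N - 1 : ℕ) : ℝ) + 1 = (N : ℝ) := by
          have : (1 : ℕ) ≤ N := hN
          push_cast [Nat.cast_sub this]
          ring
        rw [hcast]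
        linarith [hNd]

/-- Proposition 6 (existence of regular segments): if the segment `I = [c, c']` has
length `≥ N^K` (where `μ = N/(N-1)` and `K = 1 + ⌊log_μ (2/ρ)⌋`) and the set `P` of
jumpers in `I` has cardinality `≥ ρ·|I|`, then `I` contains a regular subsegment
`J = [u, v]` of length `≥ |I|/N^K`: each of the `N` congruent pieces of `J` contains
a jumper. -/
theorem stmt12 (ρ : ℝ) (hρ : 0 < ρ) (N : ℕ) (hN : 2 ≤ N)
    (μ : ℝ) (hμ : μ = (N : ℝ) / ((N : ℝ) - 1))
    (K : ℕ) (hK : K = 1 + ⌊Real.logb μ (2 / ρ)⌋₊)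
    (c c' : ℝ) (hlen : (N : ℝ) ^ K ≤ c' - c)
    (P : Finset ℕ) (hP : ∀ p ∈ P, (p : ℝ) ∈ Set.Icc c c')
    (hdense : ρ * (c' - c) ≤ P.card) :
    ∃ u v : ℝ, c ≤ u ∧ v ≤ c' ∧ (c' - c) / (N : ℝ) ^ K ≤ v - u ∧
      ∀ k : ℕ, k < N → ∃ p ∈ P,
        (p : ℝ) ∈ Set.Icc (u + k * ((v - u) / N)) (u + (k + 1) * ((v - u) / N)) := by
  have hN0 : (0 : ℝ) < N := by positivity
  have hN1 : (1 : ℝ) < N := by exact_mod_cast Nat.lt_of_lt_of_le one_lt_two hN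
  have hNm1 : (0 : ℝ) < (N : ℝ) - 1 := by linarith
  have hμ1 : 1 < μ := by
    rw [hμ, lt_div_iff₀ hNm1]; linarith
  have hμ0 : 0 < μ := by linarith
  have hL0 : 0 < c' - c := lt_of_lt_of_le (by positivity) hlen
  -- μ^K > 2/ρ
  have hlog : Real.logb μ (2 / ρ) < (K : ℝ) := by
    rw [hK]
    push_cast
    have := Nat.lt_floor_add_one (Real.logb μ (2 / ρ))
    linarith
  have hμK : 2 / ρ < μ ^ K := by
    calc 2 / ρ = μ ^ Real.logb μ (2 / ρ) :=
          (Real.rpow_logb hμ0 (ne_of_gt hμ1) (by positivity)).symm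
      _ < μ ^ (K : ℝ) := (Real.rpow_lt_rpow_left_iff hμ1).mpr hlog
      _ = μ ^ K := Real.rpow_natCast μ K
  have hμKρ : 2 < μ ^ K * ρ := by
    rw [div_lt_iff₀ hρ] at hμK; linarith
  have main : ∀ n j : ℕ, j + n = K → ∀ u v : ℝ, c ≤ u → v ≤ c' →
      v - u = (c' - c) / (N : ℝ) ^ j →
      μ ^ j * ρ * (v - u) ≤ ((P.filter (fun p : ℕ => (p : ℝ) ∈ Set.Icc u v)).card : ℝ) →
      ∃ u' v' : ℝ, c ≤ u' ∧ v' ≤ c' ∧ (c' - c) / (N : ℝ) ^ K ≤ v' - u' ∧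
        ∀ k : ℕ, k < N → ∃ p ∈ P,
          (p : ℝ) ∈ Set.Icc (u' + k * ((v' - u') / N)) (u' + (k + 1) * ((v' - u') / N)) := by
    intro n
    induction n with
    | zero =>
      intro j hj u v hu hv hlen' hcount
      exfalso
      have hjK : j = K := by omega
      subst hjK
      have h1 : (1 : ℝ) ≤ v - u := by
        rw [hlen']
        rw [le_div_iff₀ (by positivity)]
        linarith
      have hub : ((P.filter (fun p : ℕ => (p : ℝ) ∈ Set.Icc u v)).card : ℝ) ≤ v - u + 1 :=
        stmt12_count_le P u v (by linarith)
      nlinarith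
    | succ n ih =>
      intro j hj u v hu hv hlen' hcount
      have hvu : 0 < v - u := by
        rw [hlen']; positivity
      by_cases hreg : ∀ k : ℕ, k < N → ∃ p ∈ P,
          (p : ℝ) ∈ Set.Icc (u + k * ((v - u) / N)) (u + (k + 1) * ((v - u) / N))
      · refine ⟨u, v, hu, hv, ?_, hreg⟩
        rw [hlen']
        apply div_le_div_of_nonneg_left (le_of_lt hL0) (by positivity)
        exact pow_le_pow_right₀ (by linarith) (by omega)
      · push_neg at hreg
        obtain ⟨k₀, hk₀N, hk₀⟩ := hreg
        set d : ℝ := (v - u) / N with hd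
        have hd0 : 0 < d := by positivity
        have hdL : d = (c' - c) / (N : ℝ) ^ (j + 1) := by
          rw [hd, hlen', pow_succ, div_div]
        set f : ℕ → ℕ := fun k => (P.filter (fun p : ℕ =>
          (p : ℝ) ∈ Set.Icc (u + k * d) (u + (k + 1) * d))).card with hf
        have hcover : (P.filter (fun p : ℕ => (p : ℝ) ∈ Set.Icc u v)).card ≤
            ∑ k ∈ Finset.range N, f k := by
          calc (P.filter (fun p : ℕ => (p : ℝ) ∈ Set.Icc u v)).card
              ≤ ((Finset.range N).biUnion (fun k => P.filter (fun p : ℕ =>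
                (p : ℝ) ∈ Set.Icc (u + k * d) (u + (k + 1) * d)))).card :=
                Finset.card_le_card (stmt12_cover P N (by omega) u v (by linarith))
            _ ≤ ∑ k ∈ Finset.range N, f k := Finset.card_biUnion_le
        have hfk₀ : f k₀ = 0 := by
          rw [hf]
          simp only [Finset.card_eq_zero]
          apply Finset.filter_eq_empty_iff.mpr
          intro p hp
          exact hk₀ p hp
        have hsum : ∑ k ∈ (Finset.range N).erase k₀, f k = ∑ k ∈ Finset.range N, f k := by
          rw [← Finset.add_sum_erase _ f (Finset.mem_range.mpr hk₀N), hfk₀, zero_add]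
        have hcardE : ((Finset.range N).erase k₀).card = N - 1 := by
          rw [Finset.card_erase_of_mem (Finset.mem_range.mpr hk₀N), Finset.card_range]
        have hne : ((Finset.range N).erase k₀).Nonempty := by
          rw [← Finset.card_pos, hcardE]; omega
        have hconst : ∑ _k ∈ (Finset.range N).erase k₀, (μ ^ (j + 1) * ρ * d) =
            μ ^ j * ρ * (v - u) := by
          rw [Finset.sum_const, hcardE, nsmul_eq_mul]
          have hcast : ((N - 1 : ℕ) : ℝ) = (N : ℝ) - 1 := by
            rw [Nat.cast_sub (by omega : 1 ≤ N)]; norm_num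
          rw [hcast, hμ, hd, pow_succ]
          field_simp
        have hle : ∑ _k ∈ (Finset.range N).erase k₀, (μ ^ (j + 1) * ρ * d) ≤
            ∑ k ∈ (Finset.range N).erase k₀, ((f k : ℝ)) := by
          rw [hconst]
          calc μ ^ j * ρ * (v - u)
              ≤ ((P.filter (fun p : ℕ => (p : ℝ) ∈ Set.Icc u v)).card : ℝ) := hcount
            _ ≤ ((∑ k ∈ Finset.range N, f k : ℕ) : ℝ) := by exact_mod_cast hcover
            _ = ∑ k ∈ (Finset.range N).erase k₀, ((f k : ℝ)) := by
                rw [← hsum]; push_cast; ring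
        obtain ⟨k', hk'mem, hk'⟩ := Finset.exists_le_of_sum_le hne hle
        have hk'N : k' < N := Finset.mem_range.mp (Finset.mem_of_mem_erase hk'mem)
        refine ih (j + 1) (by omega) (u + k' * d) (u + (k' + 1) * d) ?_ ?_ ?_ ?_
        · have : (0 : ℝ) ≤ k' * d := by positivity
          linarith
        · have hk'1 : ((k' : ℝ) + 1) ≤ N := by exact_mod_cast hk'N
          have hNd : (N : ℝ) * d = v - u := by rw [hd]; field_simp
          nlinarith
        · rw [hdL]; ring
        · have : u + (k' + 1) * d - (u + k' * d) = d := by ring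
          rw [this]
          calc μ ^ (j + 1) * ρ * d ≤ (f k' : ℝ) := hk'
            _ = _ := by rw [hf]
  have h0 : (0 : ℝ) ≤ μ ^ 0 * ρ * (c' - c) := by positivity
  have := main K 0 (by omega) c c' le_rfl le_rfl (by simp)
    (by
      simp only [pow_zero, one_mul]
      calc ρ * (c' - c) ≤ (P.card : ℝ) := hdense
        _ = ((P.filter (fun p : ℕ => (p : ℝ) ∈ Set.Icc c c')).card : ℝ) := by
            congr 1
            rw [Finset.filter_true_of_mem hP]
      )
  exact this
end

section
/- Let 𝒜_d be a finite collection of pairwise disjoint open intervals in [0, l], each of length > (4/5)d, whose union has total length ≥ ε·l. Suppose to each I ∈ 𝒜_d is assigned a nonnegative 'area' a(Q_I) ≥ c·d·|I| for a constant c > 0, and areas of quadrilaterals over intervals at mutual distance > (4/5)d add up (do not overlap). Then there is a subfamily ℬ ⊆ 𝒜_d, with pairwise distances > (4/5)d, such that Σ_{I ∈ ℬ} a(Q_I) ≥ (c/3)·ε·d·l. -/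
/-- If two nonempty open intervals are disjoint and the first starts no later,
then the first ends before the second starts. -/
lemma ioo_disjoint_order {a b a' b' : ℝ} (hab : a < b) (hab' : a' < b')
    (hd : Disjoint (Set.Ioo a b) (Set.Ioo a' b')) (h : a ≤ a') : b ≤ a' := by
  by_contra h'
  push_neg at h'
  set x := (a' + min b b') / 2 with hx
  have h1 : a' < min b b' := lt_min h' hab'
  have hx1 : a' < x := by simp only [hx]; linarith
  have hx2 : x < min b b' := by simp only [hx]; linarith
  have hmem1 : x ∈ Set.Ioo a b := ⟨lt_of_le_of_lt h hx1, lt_of_lt_of_le hx2 (min_le_left _ _)⟩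
  have hmem2 : x ∈ Set.Ioo a' b' := ⟨hx1, lt_of_lt_of_le hx2 (min_le_right _ _)⟩
  exact Set.disjoint_left.mp hd hmem1 hmem2

/-- Any finite family of pairwise disjoint intervals, each of length `> (4/5)d`,
can be partitioned into two subfamilies whose members are pairwise far apart. -/
lemma far_partition (d : ℝ) (hd : 0 < d) :
    ∀ 𝒜 : Finset (ℝ × ℝ),
      (∀ p ∈ 𝒜, (4 / 5) * d < p.2 - p.1) →
      (∀ p ∈ 𝒜, ∀ q ∈ 𝒜, p ≠ q → Disjoint (Set.Ioo p.1 p.2) (Set.Ioo q.1 q.2)) →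
      ∃ ℬ₀ ℬ₁ : Finset (ℝ × ℝ), ℬ₀ ∪ ℬ₁ = 𝒜 ∧ Disjoint ℬ₀ ℬ₁ ∧
        (∀ p ∈ ℬ₀, ∀ q ∈ ℬ₀, p ≠ q → (4 / 5) * d < max (q.1 - p.2) (p.1 - q.2)) ∧
        (∀ p ∈ ℬ₁, ∀ q ∈ ℬ₁, p ≠ q → (4 / 5) * d < max (q.1 - p.2) (p.1 - q.2)) := by
  intro 𝒜
  induction 𝒜 using Finset.strongInduction with
  | _ s ih =>
    intro hlen hdisj
    rcases s.eq_empty_or_nonempty with rfl | hne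
    · exact ⟨∅, ∅, by simp, by simp, by simp, by simp⟩
    -- pick p with minimal left endpoint
    obtain ⟨p, hp, hpmin⟩ := s.exists_min_image Prod.fst hne
    have hpos : ∀ r ∈ s, r.1 < r.2 := fun r hr => by
      have := hlen r hr; nlinarith
    -- every other interval starts after p ends
    have hafter : ∀ r ∈ s, r ≠ p → p.2 ≤ r.1 := by
      intro r hr hrp
      exact ioo_disjoint_order (hpos p hp) (hpos r hr)
        (hdisj p hp r hr (Ne.symm hrp)) (hpmin r hr)
    set s' := s.erase p with hs'
    rcases s'.eq_empty_or_nonempty with he | hne'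
    · refine ⟨{p}, ∅, ?_, by simp, ?_, by simp⟩
      · have : s = {p} := by
          apply Finset.eq_singleton_iff_unique_mem.mpr
          exact ⟨hp, fun x hx => by
            by_contra hxp
            exact (Finset.ne_empty_of_mem (Finset.mem_erase.mpr ⟨hxp, hx⟩)) he⟩
        simp [this]
      · intro a ha b hb hab
        simp only [Finset.mem_singleton] at ha hb
        exact absurd (ha.trans hb.symm) hab
    -- q : leftmost interval of s'
    obtain ⟨q, hq, hqmin⟩ := s'.exists_min_image Prod.fst hne'
    have hq_s : q ∈ s := Finset.mem_of_mem_erase hq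
    have hq_ne_p : q ≠ p := Finset.ne_of_mem_erase hq
    -- induction hypothesis on s'
    have hss : s' ⊂ s := Finset.erase_ssubset hp
    obtain ⟨ℬ₀, ℬ₁, hun, hdj, hfar₀, hfar₁⟩ :=
      ih s' hss (fun r hr => hlen r (Finset.mem_of_mem_erase hr))
        (fun a ha b hb hab =>
          hdisj a (Finset.mem_of_mem_erase ha) b (Finset.mem_of_mem_erase hb) hab)
    have hsub₀ : ℬ₀ ⊆ s' := hun ▸ Finset.subset_union_left
    have hsub₁ : ℬ₁ ⊆ s' := hun ▸ Finset.subset_union_right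
    have hp_not : p ∉ s' := Finset.notMem_erase p s
    -- key: p is far from any r ∈ s' with r ≠ q
    have hkey : ∀ r ∈ s', r ≠ q → (4 / 5) * d < r.1 - p.2 := by
      intro r hr hrq
      have h1 : q.2 ≤ r.1 :=
        ioo_disjoint_order (hpos q hq_s) (hpos r (Finset.mem_of_mem_erase hr))
          (hdisj q hq_s r (Finset.mem_of_mem_erase hr) (Ne.symm hrq)) (hqmin r hr)
      have h2 : p.2 ≤ q.1 := hafter q hq_s hq_ne_p
      have h3 := hlen q hq_s
      linarith
    -- far with insert p for a class not containing q
    have hfar_ins : ∀ ℬ : Finset (ℝ × ℝ), ℬ ⊆ s' → q ∉ ℬ →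
        (∀ a ∈ ℬ, ∀ b ∈ ℬ, a ≠ b → (4 / 5) * d < max (b.1 - a.2) (a.1 - b.2)) →
        (∀ a ∈ insert p ℬ, ∀ b ∈ insert p ℬ, a ≠ b →
          (4 / 5) * d < max (b.1 - a.2) (a.1 - b.2)) := by
      intro ℬ hsubB hqB hfar a ha b hb hab
      simp only [Finset.mem_insert] at ha hb
      rcases ha with rfl | ha
      · rcases hb with rfl | hb
        · exact absurd rfl hab
        · have hbq : b ≠ q := fun h => hqB (h ▸ hb)
          exact lt_max_of_lt_left (hkey b (hsubB hb) hbq)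
      · rcases hb with rfl | hb
        · have haq : a ≠ q := fun h => hqB (h ▸ ha)
          exact lt_max_of_lt_right (hkey a (hsubB ha) haq)
        · exact hfar a ha b hb hab
    by_cases hqc : q ∈ ℬ₀
    · -- q ∈ ℬ₀, so q ∉ ℬ₁; put p with ℬ₁
      have hq1 : q ∉ ℬ₁ := fun h => (Finset.disjoint_left.mp hdj hqc) h
      refine ⟨ℬ₀, insert p ℬ₁, ?_, ?_, hfar₀, hfar_ins ℬ₁ hsub₁ hq1 hfar₁⟩
      · rw [Finset.union_insert, hun, hs', Finset.insert_erase hp]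
      · rw [Finset.disjoint_insert_right]
        exact ⟨fun h => hp_not (hsub₀ h), hdj⟩
    · have hq0 : q ∉ ℬ₀ := hqc
      refine ⟨insert p ℬ₀, ℬ₁, ?_, ?_, hfar_ins ℬ₀ hsub₀ hq0 hfar₀, hfar₁⟩
      · rw [Finset.insert_union, hun, hs', Finset.insert_erase hp]
      · rw [Finset.disjoint_insert_left]
        exact ⟨fun h => hp_not (hsub₁ h), hdj⟩

/-- Final counting step in the proof of Theorem 2. -/
theorem stmt19 (d l ε c : ℝ) (hd : 0 < d) (hε : 0 < ε) (hc : 0 < c)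
    (𝒜 : Finset (ℝ × ℝ))
    (hsub : ∀ p ∈ 𝒜, 0 ≤ p.1 ∧ p.2 ≤ l)
    (hlen : ∀ p ∈ 𝒜, (4 / 5) * d < p.2 - p.1)
    (hdisj : ∀ p ∈ 𝒜, ∀ q ∈ 𝒜, p ≠ q → Disjoint (Set.Ioo p.1 p.2) (Set.Ioo q.1 q.2))
    (htot : ε * l ≤ ∑ p ∈ 𝒜, (p.2 - p.1))
    (A : ℝ × ℝ → ℝ) (hA0 : ∀ p ∈ 𝒜, 0 ≤ A p)
    (hA : ∀ p ∈ 𝒜, c * d * (p.2 - p.1) ≤ A p) :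
    ∃ ℬ ⊆ 𝒜,
      (∀ p ∈ ℬ, ∀ q ∈ ℬ, p ≠ q → (4 / 5) * d < max (q.1 - p.2) (p.1 - q.2)) ∧
      (c / 3) * ε * d * l ≤ ∑ p ∈ ℬ, A p := by
  obtain ⟨ℬ₀, ℬ₁, hun, hdj, hfar₀, hfar₁⟩ := far_partition d hd 𝒜 hlen hdisj
  have hsub₀ : ℬ₀ ⊆ 𝒜 := hun ▸ Finset.subset_union_left
  have hsub₁ : ℬ₁ ⊆ 𝒜 := hun ▸ Finset.subset_union_right
  have hsum : ∑ p ∈ ℬ₀, A p + ∑ p ∈ ℬ₁, A p = ∑ p ∈ 𝒜, A p := by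
    rw [← Finset.sum_union hdj, hun]
  have hAt : c * d * (ε * l) ≤ ∑ p ∈ 𝒜, A p := by
    calc c * d * (ε * l) ≤ c * d * ∑ p ∈ 𝒜, (p.2 - p.1) := by
          apply mul_le_mul_of_nonneg_left htot (by positivity)
      _ = ∑ p ∈ 𝒜, c * d * (p.2 - p.1) := by rw [Finset.mul_sum]
      _ ≤ ∑ p ∈ 𝒜, A p := Finset.sum_le_sum hA
  have h0 : (0:ℝ) ≤ ∑ p ∈ ℬ₀, A p := Finset.sum_nonneg fun p hp => hA0 p (hsub₀ hp)
  have h1 : (0:ℝ) ≤ ∑ p ∈ ℬ₁, A p := Finset.sum_nonneg fun p hp => hA0 p (hsub₁ hp)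
  by_cases hcmp : ∑ p ∈ ℬ₁, A p ≤ ∑ p ∈ ℬ₀, A p
  · exact ⟨ℬ₀, hsub₀, hfar₀, by nlinarith⟩
  · exact ⟨ℬ₁, hsub₁, hfar₁, by nlinarith⟩
end
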